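/- Consider the 7-dimensional real Lie algebra so3w4 with basis J_1,J_2,J_3,W_1,W_2,W_3,W_4 and brackets [J_x,J_y]=ε_{xyz}J_z, [J_x,W_i]=(J^{+|x})_{ij}W_j (the self-dual 't Hooft matrices), [W_i,W_j]=0. This satisfies the Jacobi identity, and its Ricci matrix equals diag(1/4,1/4,1/4,0,0,0,0); in particular the Ricci matrix is degenerate and not positive definite. -/

import Mathlib

open Matrix

open scoped BigOperators

/-- The Ricci matrix built from structure constants `τ^A_{IB} = τ A I B`:
`Ric^I_J = -(1/4)Tr(τ_I τ_J) - (1/4)Tr(τ_I τ_Jᵀ) + (1/8)Σ_K (τ_K τ_Kᵀ)^{IJ}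
 - (1/4)Σ_K τ^I_{KJ} Tr(τ_K) + (1/4)Σ_K τ^K_{IJ} Tr(τ_K) - (1/4)Σ_K τ^J_{KI} Tr(τ_K)`. -/
noncomputable def RicciMatrix {n : ℕ} (τ : Fin n → Fin n → Fin n → ℝ) :
    Matrix (Fin n) (Fin n) ℝ :=
  let t : Fin n → Matrix (Fin n) (Fin n) ℝ := fun I => Matrix.of fun A B => τ A I B
  Matrix.of fun I J =>
    -(1/4) * (t I * t J).trace - (1/4) * (t I * (t J)ᵀ).trace
      + (1/8) * ∑ K, (t K * (t K)ᵀ) I J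
      - (1/4) * ∑ K, τ I K J * (t K).trace
      + (1/4) * ∑ K, τ K I J * (t K).trace
      - (1/4) * ∑ K, τ J K I * (t K).trace

/-- The Jacobi identity for structure constants `τ^K_{IJ} = τ K I J`. -/
def JacobiId {n : ℕ} (τ : Fin n → Fin n → Fin n → ℝ) : Prop :=
  ∀ I J K M : Fin n,
    ∑ L, (τ M L K * τ L I J + τ M L I * τ L J K + τ M L J * τ L K I) = 0

/-- The self-dual 't Hooft matrices `J^{+|x}`. -/
noncomputable def Jp : Fin 3 → Matrix (Fin 4) (Fin 4) ℝ :=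
  ![!![0, 1/2, 0, 0; -1/2, 0, 0, 0; 0, 0, 0, 1/2; 0, 0, -1/2, 0],
    !![0, 0, -1/2, 0; 0, 0, 0, 1/2; 1/2, 0, 0, 0; 0, -1/2, 0, 0],
    !![0, 0, 0, 1/2; 0, 0, 1/2, 0; 0, -1/2, 0, 0; -1/2, 0, 0, 0]]

/-- The Levi-Civita symbol on three indices `0,1,2` (as naturals), `ε_{012} = 1`. -/
noncomputable def epsN (x y z : ℕ) : ℝ :=
  (((x : ℝ) - y) * ((y : ℝ) - z) * ((z : ℝ) - x)) / 2

/-- Extension of the entries of the 't Hooft matrices to natural number indices. -/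
noncomputable def JpN (x i j : ℕ) : ℝ :=
  if hx : x < 3 then if hi : i < 4 then if hj : j < 4 then Jp ⟨x, hx⟩ ⟨i, hi⟩ ⟨j, hj⟩
    else 0 else 0 else 0

/-- Structure constants `τ^A_{IB}` of the algebra `so3w4` in the ordered basis
`(J₁,J₂,J₃,W₁,W₂,W₃,W₄)`: `[J_x,J_y]=ε_{xyz}J_z`, `[J_x,W_i]=(J^{+|x})_{ij}W_j`,
`[W_i,W_j]=0`. -/
noncomputable def tauSO3W4 : Fin 7 → Fin 7 → Fin 7 → ℝ := fun A I B =>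
  if A.1 < 3 ∧ I.1 < 3 ∧ B.1 < 3 then epsN I.1 B.1 A.1
  else if I.1 < 3 ∧ 3 ≤ B.1 ∧ 3 ≤ A.1 then JpN I.1 (A.1 - 3) (B.1 - 3)
  else if 3 ≤ I.1 ∧ B.1 < 3 ∧ 3 ≤ A.1 then -JpN B.1 (A.1 - 3) (I.1 - 3)
  else 0

/-! ### Auxiliary integer-valued versions (twice the real ones) -/

/-- Integer version of the 't Hooft matrices: `zJp = 2 • Jp`. -/
def zJp : Fin 3 → Fin 4 → Fin 4 → ℤ :=
  ![fun i j => ![![0, 1, 0, 0], ![-1, 0, 0, 0], ![0, 0, 0, 1], ![0, 0, -1, 0]] i j,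
    fun i j => ![![0, 0, -1, 0], ![0, 0, 0, 1], ![1, 0, 0, 0], ![0, -1, 0, 0]] i j,
    fun i j => ![![0, 0, 0, 1], ![0, 0, 1, 0], ![0, -1, 0, 0], ![-1, 0, 0, 0]] i j]

/-- Integer version of `2 * epsN`. -/
def zeps (x y z : ℕ) : ℤ := ((x:ℤ) - y) * ((y:ℤ) - z) * ((z:ℤ) - x)

/-- Integer version of `2 * JpN`. -/
def zJpN (x i j : ℕ) : ℤ :=
  if hx : x < 3 then if hi : i < 4 then if hj : j < 4 then zJp ⟨x, hx⟩ ⟨i, hi⟩ ⟨j, hj⟩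
    else 0 else 0 else 0

/-- Integer structure constants: `zτ = 2 • tauSO3W4`. -/
def zτ : Fin 7 → Fin 7 → Fin 7 → ℤ := fun A I B =>
  if A.1 < 3 ∧ I.1 < 3 ∧ B.1 < 3 then zeps I.1 B.1 A.1
  else if I.1 < 3 ∧ 3 ≤ B.1 ∧ 3 ≤ A.1 then zJpN I.1 (A.1 - 3) (B.1 - 3)
  else if 3 ≤ I.1 ∧ B.1 < 3 ∧ 3 ≤ A.1 then -zJpN B.1 (A.1 - 3) (I.1 - 3)
  else 0

lemma Jp_cast (x : Fin 3) (i j : Fin 4) : Jp x i j = (zJp x i j : ℝ) / 2 := by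
  fin_cases x <;> fin_cases i <;> fin_cases j <;> norm_num [Jp, zJp]

lemma JpN_cast (x i j : ℕ) : JpN x i j = (zJpN x i j : ℝ) / 2 := by
  unfold JpN zJpN
  split_ifs <;> simp [Jp_cast]

lemma epsN_cast (x y z : ℕ) : epsN x y z = (zeps x y z : ℝ) / 2 := by
  unfold epsN zeps; push_cast; ring

lemma tau_cast (A I B : Fin 7) : tauSO3W4 A I B = (zτ A I B : ℝ) / 2 := by
  unfold tauSO3W4 zτ
  split_ifs <;> simp [epsN_cast, JpN_cast, neg_div]

set_option maxRecDepth 100000 in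
lemma zjacobi : ∀ I J K M : Fin 7,
    ∑ L, (zτ M L K * zτ L I J + zτ M L I * zτ L J K + zτ M L J * zτ L K I) = 0 := by
  decide

/-- `32 ·` the Ricci matrix, as an integer combination of the integer structure constants. -/
def Zcomb (z : Fin 7 → Fin 7 → Fin 7 → ℤ) : Fin 7 → Fin 7 → ℤ := fun I J =>
  -2 * (∑ A, ∑ B, z A I B * z B J A) - 2 * (∑ A, ∑ B, z A I B * z A J B)
    + (∑ K, ∑ B, z I K B * z J K B)
    - 2 * (∑ K, z I K J * (∑ A, z A K A))
    + 2 * (∑ K, z K I J * (∑ A, z A K A))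
    - 2 * (∑ K, z J K I * (∑ A, z A K A))

set_option maxRecDepth 100000 in
lemma zcomb_val : ∀ I J : Fin 7, Zcomb zτ I J = (if I = J ∧ I.1 < 3 then 8 else 0) := by
  decide

set_option maxHeartbeats 2000000 in
lemma ricci_entry (I J : Fin 7) :
    RicciMatrix tauSO3W4 I J = (Zcomb zτ I J : ℝ) / 32 := by
  simp only [RicciMatrix, Zcomb, Matrix.trace, Matrix.mul_apply, Matrix.transpose_apply,
    Matrix.of_apply, Matrix.diag_apply, Fin.sum_univ_seven, tau_cast]
  push_cast
  ring

lemma ricci_eq : RicciMatrix tauSO3W4 = Matrix.diagonal ![1/4, 1/4, 1/4, 0, 0, 0, 0] := by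
  ext I J
  rw [ricci_entry, zcomb_val]
  rcases eq_or_ne I J with rfl | h
  · rw [Matrix.diagonal_apply_eq]
    fin_cases I <;> norm_num
  · rw [Matrix.diagonal_apply_ne _ h]
    simp [h]

/-- The bracket of `so3w4` satisfies the Jacobi identity, and its Ricci matrix equals
`diag(1/4, 1/4, 1/4, 0, 0, 0, 0)`; in particular it is degenerate and not positive
definite. -/
theorem ricci_so3w4 :
    JacobiId tauSO3W4 ∧
    RicciMatrix tauSO3W4 = Matrix.diagonal ![1/4, 1/4, 1/4, 0, 0, 0, 0] ∧
    (RicciMatrix tauSO3W4).det = 0 ∧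
    ¬ (RicciMatrix tauSO3W4).PosDef := by
  refine ⟨?_, ricci_eq, ?_, ?_⟩
  · intro I J K M
    have h := zjacobi I J K M
    simp only [Fin.sum_univ_seven] at h ⊢
    simp only [tau_cast]
    have h' := congrArg (fun z : ℤ => (z : ℝ)) h
    push_cast at h'
    linear_combination h' / 4
  · rw [ricci_eq]
    simp [Matrix.det_diagonal, Fin.prod_univ_seven]
  · intro h
    have h3 := h.dotProduct_mulVec_pos (x := Pi.single (3 : Fin 7) 1) (by
      intro hx
      have := congrFun hx (3 : Fin 7)
      simp [Pi.single_apply] at this)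
    rw [ricci_eq] at h3
    simp [Matrix.mulVec, dotProduct, Fin.sum_univ_seven, Matrix.diagonal,
      Pi.single_apply] at h3
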